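/- Let p > 3. Then sup_{t>0} (1+t)·log²(2+t) · ∫₀ᵗ [log²(2+τ) / ((1+|t−τ|)·log²(2+|t−τ|)·(1+τ)^{3−6/p})] dτ < ∞. -/

import Mathlib

open Real MeasureTheory

lemma log_le_rpow_aux {x c : ℝ} (hc : 0 < c) (hx : 1 ≤ x) : Real.log x ≤ x ^ c / c := by
  have hx0 : 0 < x := lt_of_lt_of_le one_pos hx
  have h1 : Real.log (x ^ c) = c * Real.log x := Real.log_rpow hx0 c
  have h2 : Real.log (x ^ c) ≤ x ^ c - 1 := Real.log_le_sub_one_of_pos (Real.rpow_pos_of_pos hx0 c)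
  rw [le_div_iff₀ hc]
  nlinarith [Real.rpow_pos_of_pos hx0 c]

lemma integral_one_add_rpow_le {b T : ℝ} (hb : 1 < b) (hT : 0 ≤ T) :
    ∫ τ in (0:ℝ)..T, (1+τ) ^ (-b) ≤ 1/(b-1) := by
  have h : (∫ τ in (0:ℝ)..T, (1+τ) ^ (-b)) = ∫ x in (1:ℝ)..(1+T), x ^ (-b) := by
    simpa using intervalIntegral.integral_comp_add_left (a:=0) (b:=T) (fun x => x ^ (-b)) 1
  rw [h, integral_rpow (Or.inr ⟨by linarith, by
    rw [Set.uIcc_of_le (by linarith)]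
    intro h0
    exact absurd h0.1 (by norm_num)⟩)]
  have h1 : (0:ℝ) ≤ (1+T) ^ (-b+1) := Real.rpow_nonneg (by linarith) _
  have h2 : (1:ℝ) ^ (-b+1) = 1 := Real.one_rpow _
  rw [h2]
  have heq : ((1+T) ^ (-b+1) - 1)/(-b+1) = (1 - (1+T) ^ (-b+1))/(b-1) := by
    rw [div_eq_div_iff (by linarith) (by linarith)]; ring
  rw [heq]
  gcongr
  · linarith

lemma integral_kernel_le {T : ℝ} (hT : 0 ≤ T) :
    ∫ s in (0:ℝ)..T, 1/((2+s) * Real.log (2+s)^2) ≤ 1/Real.log 2 := by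
  have hlog2 : (0:ℝ) < Real.log 2 := Real.log_pos (by norm_num)
  have hderiv : ∀ s ∈ Set.uIcc (0:ℝ) T,
      HasDerivAt (fun s => -(Real.log (2+s))⁻¹) (1/((2+s) * Real.log (2+s)^2)) s := by
    intro s hs
    rw [Set.uIcc_of_le hT] at hs
    have hs0 : (0:ℝ) ≤ s := hs.1
    have h2s : (0:ℝ) < 2 + s := by linarith
    have hlg : 0 < Real.log (2+s) := Real.log_pos (by linarith)
    have hd1 : HasDerivAt (fun s : ℝ => 2 + s) 1 s := by
      simpa using (hasDerivAt_id s).const_add 2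
    have hd2 : HasDerivAt (fun s : ℝ => Real.log (2+s)) (1/(2+s)) s := by
      simpa [one_div] using hd1.log (ne_of_gt h2s)
    have hd3 := (hd2.inv (ne_of_gt hlg)).neg
    rw [show (1/((2+s) * Real.log (2+s)^2)) = -(-(1/(2+s)) / Real.log (2+s)^2) by field_simp]
    exact hd3
  have hint : IntervalIntegrable (fun s => 1/((2+s) * Real.log (2+s)^2)) volume 0 T := by
    apply ContinuousOn.intervalIntegrable
    apply ContinuousOn.div continuousOn_const
    · exact (((continuousOn_const.add continuousOn_id).mul
        (((continuousOn_const.add continuousOn_id).log (by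
          intro x hx; rw [Set.uIcc_of_le hT] at hx
          have := hx.1
          simp only [Pi.add_apply, id_eq]
          positivity)).pow 2)))
    · intro x hx
      rw [Set.uIcc_of_le hT] at hx
      have hx0 : (0:ℝ) ≤ x := hx.1
      have : 0 < Real.log (2+x) := Real.log_pos (by linarith)
      positivity
  rw [intervalIntegral.integral_eq_sub_of_hasDerivAt hderiv hint]
  have hlgT : 0 < Real.log (2+T) := Real.log_pos (by linarith)
  have : (0:ℝ) < (Real.log (2+T))⁻¹ := by positivity
  rw [one_div]
  linarith

set_option maxHeartbeats 2000000 in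
lemma stmt_10_aux (a : ℝ) (ha1 : 1 < a) (ha3 : a < 3) :
    ∃ C : ℝ, ∀ t : ℝ, 0 < t →
      (1 + t) * (Real.log (2 + t))^2 *
        ∫ τ in (0:ℝ)..t,
          (Real.log (2 + τ))^2 /
            ((1 + |t - τ|) * (Real.log (2 + |t - τ|))^2 * (1 + τ) ^ a) ≤ C := by
  obtain ⟨c, hc_def⟩ : ∃ c : ℝ, c = (a-1)/4 := ⟨_, rfl⟩
  have hc : 0 < c := by rw [hc_def]; linarith
  have hlog2 : (0:ℝ) < Real.log 2 := Real.log_pos (by norm_num)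
  refine ⟨32/(c^2*(a-1)) + 2/Real.log 2 * (32/c^4), ?_⟩
  intro t ht
  have h1t : (0:ℝ) < 1 + t := by linarith
  obtain ⟨L, hL_def⟩ : ∃ L : ℝ, L = Real.log (2+t) := ⟨_, rfl⟩
  have hLpos : 0 < L := by rw [hL_def]; exact Real.log_pos (by linarith)
  obtain ⟨F, hF_def⟩ : ∃ F : ℝ → ℝ, F = fun τ => (Real.log (2 + τ))^2 /
      ((1 + |t - τ|) * (Real.log (2 + |t - τ|))^2 * (1 + τ) ^ a) := ⟨_, rfl⟩
  rw [← hL_def, ← hF_def]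
  -- continuity of F on [0, t]
  have hFc : ContinuousOn F (Set.Icc 0 t) := by
    rw [hF_def]
    have cabs : Continuous fun τ : ℝ => |t - τ| := (continuous_const.sub continuous_id).abs
    apply ContinuousOn.div
    · exact (((continuousOn_const.add continuousOn_id).log
        (fun x hx => by
          have := hx.1
          simp only [Pi.add_apply, id_eq]
          positivity)).pow 2)
    · refine ((continuous_const.add cabs).mul
        (((continuous_const.add cabs).log (fun x => by simp only [Pi.add_apply]; positivity)).pow 2)).continuousOn.mul
        (ContinuousOn.rpow_const (continuousOn_const.add continuousOn_id)
          (fun x hx => Or.inr (by linarith)))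
    · intro x hx
      have h1 := abs_nonneg (t - x)
      have h2 : 0 < Real.log (2+|t-x|) := Real.log_pos (by linarith)
      have h3 : (0:ℝ) < (1+x) ^ a := Real.rpow_pos_of_pos (by linarith [hx.1]) a
      exact ne_of_gt (mul_pos (mul_pos (by linarith) (by positivity)) h3)
  have hI1 : IntervalIntegrable F volume 0 (t/2) :=
    (hFc.mono (by rw [Set.uIcc_of_le (by linarith)]
                  exact Set.Icc_subset_Icc le_rfl (by linarith))).intervalIntegrable
  have hI2 : IntervalIntegrable F volume (t/2) t :=
    (hFc.mono (by rw [Set.uIcc_of_le (by linarith)]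
                  exact Set.Icc_subset_Icc (by linarith) le_rfl)).intervalIntegrable
  obtain ⟨b, hb_def⟩ : ∃ b : ℝ, b = (a+1)/2 := ⟨_, rfl⟩
  have hbb : 1 < b := by rw [hb_def]; linarith
  obtain ⟨KA, hKA_def⟩ : ∃ KA : ℝ, KA = 16/c^2/((1+t)*L^2) := ⟨_, rfl⟩
  have hKA : 0 ≤ KA := by rw [hKA_def]; positivity
  -- Part A
  have hA : (∫ τ in (0:ℝ)..(t/2), F τ) ≤ KA * (1/(b-1)) := by
    have hgc : ContinuousOn (fun τ => KA * (1+τ) ^ (-b)) (Set.uIcc 0 (t/2)) := by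
      rw [Set.uIcc_of_le (by linarith)]
      exact continuousOn_const.mul (ContinuousOn.rpow_const
        (f := fun x : ℝ => 1 + x) (by fun_prop)
        (fun x hx => Or.inl (by intro h0; have h1 : (1:ℝ) + x = 0 := h0; have h2 := hx.1; linarith)))
    have hmono : (∫ τ in (0:ℝ)..(t/2), F τ) ≤ ∫ τ in (0:ℝ)..(t/2), KA * (1+τ) ^ (-b) := by
      apply intervalIntegral.integral_mono_on (by linarith) hI1 hgc.intervalIntegrable
      intro τ hτ
      obtain ⟨hτ0, hτt⟩ := hτ
      have hττ : τ ≤ t := by linarith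
      have h1τ : (0:ℝ) < 1 + τ := by linarith
      have habs : |t - τ| = t - τ := abs_of_nonneg (by linarith)
      rw [hF_def]
      simp only [habs]
      -- numerator bound
      have hnum : (Real.log (2+τ))^2 ≤ 2/c^2 * (1+τ) ^ (2*c) := by
        have hl : Real.log (2+τ) ≤ (2+τ) ^ c / c := log_le_rpow_aux hc (by linarith)
        have hl0 : 0 ≤ Real.log (2+τ) := Real.log_nonneg (by linarith)
        have hsq : (Real.log (2+τ))^2 ≤ ((2+τ) ^ c / c)^2 := pow_le_pow_left₀ hl0 hl 2
        have h2 : ((2+τ) ^ c / c)^2 = (2+τ) ^ (2*c) / c^2 := by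
          rw [div_pow, ← Real.rpow_natCast ((2+τ) ^ c) 2, ← Real.rpow_mul (by linarith)]
          norm_num [mul_comm]
        have h3 : (2+τ) ^ (2*c) ≤ 2 * (1+τ) ^ (2*c) := by
          have hle : (2+τ) ≤ 2*(1+τ) := by linarith
          have hh := Real.rpow_le_rpow (by linarith) hle (by linarith : (0:ℝ) ≤ 2*c)
          rw [Real.mul_rpow (by norm_num) (by linarith)] at hh
          have h2c : (2:ℝ) ^ (2*c) ≤ 2 := by
            calc (2:ℝ) ^ (2*c) ≤ (2:ℝ) ^ (1:ℝ) :=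
                  Real.rpow_le_rpow_of_exponent_le (by norm_num) (by rw [hc_def]; linarith)
              _ = 2 := Real.rpow_one 2
          nlinarith [Real.rpow_nonneg (show (0:ℝ) ≤ 1+τ by linarith) (2*c)]
        calc (Real.log (2+τ))^2 ≤ (2+τ) ^ (2*c) / c^2 := by rw [← h2]; exact hsq
          _ ≤ 2 * (1+τ) ^ (2*c) / c^2 := by gcongr
          _ = 2/c^2 * (1+τ) ^ (2*c) := by ring
      -- denominator bounds
      have hd1 : (1+t)/2 ≤ 1 + (t - τ) := by linarith
      have hd2 : L^2/4 ≤ (Real.log (2+(t-τ)))^2 := by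
        have hlg0 : 0 ≤ Real.log (2+(t-τ)) := Real.log_nonneg (by linarith)
        have hmono2 : L ≤ 2 * Real.log (2+(t-τ)) := by
          have h1 : (2+t) ≤ (2+(t-τ))^2 := by nlinarith
          have h2 : Real.log (2+t) ≤ Real.log ((2+(t-τ))^2) :=
            Real.log_le_log (by linarith) h1
          rw [Real.log_pow] at h2
          push_cast at h2
          rw [hL_def]
          linarith [h2]
        nlinarith [hLpos.le]
      have hd3 : (0:ℝ) < (1+τ) ^ a := Real.rpow_pos_of_pos h1τ a
      have hDpos : (0:ℝ) < (1+t)/2 * (L^2/4) * (1+τ) ^ a := by positivity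
      have hstep : (Real.log (2+τ))^2 / ((1+(t-τ)) * (Real.log (2+(t-τ)))^2 * (1+τ) ^ a)
          ≤ (2/c^2 * (1+τ) ^ (2*c)) / ((1+t)/2 * (L^2/4) * (1+τ) ^ a) := by
        apply div_le_div₀ (by positivity) hnum hDpos
        have hlg0 : 0 ≤ Real.log (2+(t-τ)) := Real.log_nonneg (by linarith)
        apply mul_le_mul _ le_rfl hd3.le
          (mul_nonneg (by linarith) (by positivity))
        apply mul_le_mul hd1 hd2 (by positivity) (by linarith)
      refine hstep.trans (le_of_eq ?_)
      have hrw : (1+τ) ^ (-b) = (1+τ) ^ (2*c) / (1+τ) ^ a := by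
        rw [← Real.rpow_sub h1τ]
        congr 1
        rw [hc_def, hb_def]; ring
      rw [hKA_def, hrw]
      have hLne : L ≠ 0 := ne_of_gt hLpos
      have h1tne : (1+t) ≠ 0 := ne_of_gt h1t
      have hcne : c ≠ 0 := ne_of_gt hc
      field_simp
      ring
    refine hmono.trans ?_
    rw [intervalIntegral.integral_const_mul]
    exact mul_le_mul_of_nonneg_left (integral_one_add_rpow_le hbb (by linarith)) hKA
  -- Part B
  obtain ⟨KB, hKB_def⟩ : ∃ KB : ℝ, KB = 2 * L^2 * ((1+t)/2) ^ (-a) := ⟨_, rfl⟩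
  have hKB : 0 ≤ KB := by
    rw [hKB_def]
    have : (0:ℝ) < ((1+t)/2) ^ (-a) := Real.rpow_pos_of_pos (by linarith) _
    positivity
  have hB : (∫ τ in (t/2)..t, F τ) ≤ KB * (1/Real.log 2) := by
    have hgc : ContinuousOn (fun τ => KB * (1/((2+(t-τ)) * Real.log (2+(t-τ))^2)))
        (Set.uIcc (t/2) t) := by
      rw [Set.uIcc_of_le (by linarith)]
      apply continuousOn_const.mul
      apply ContinuousOn.div continuousOn_const
      · exact ((continuousOn_const.add (continuousOn_const.sub continuousOn_id)).mul
          (((continuousOn_const.add (continuousOn_const.sub continuousOn_id)).log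
            (fun x hx => by
              have := hx.2
              simp only [Pi.add_apply, Pi.sub_apply, id_eq]
              intro h0
              linarith)).pow 2))
      · intro x hx
        have hx2 : x ≤ t := hx.2
        have h2 : 0 < Real.log (2+(t-x)) := Real.log_pos (by linarith)
        have : (0:ℝ) < 2+(t-x) := by linarith
        positivity
    have hmono : (∫ τ in (t/2)..t, F τ)
        ≤ ∫ τ in (t/2)..t, KB * (1/((2+(t-τ)) * Real.log (2+(t-τ))^2)) := by
      apply intervalIntegral.integral_mono_on (by linarith) hI2 hgc.intervalIntegrable
      intro τ hτ
      obtain ⟨hτ0, hτt⟩ := hτ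
      have hτ0' : (0:ℝ) ≤ τ := by linarith
      have h1τ : (0:ℝ) < 1 + τ := by linarith
      have habs : |t - τ| = t - τ := abs_of_nonneg (by linarith)
      rw [hF_def]
      simp only [habs]
      have hlg0 : 0 ≤ Real.log (2+(t-τ)) := Real.log_nonneg (by linarith)
      have hlgpos : 0 < Real.log (2+(t-τ)) := Real.log_pos (by linarith)
      have hnum : (Real.log (2+τ))^2 ≤ L^2 := by
        have h1 : Real.log (2+τ) ≤ L := by
          rw [hL_def]; exact Real.log_le_log (by linarith) (by linarith)
        have h2 : 0 ≤ Real.log (2+τ) := Real.log_nonneg (by linarith)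
        nlinarith
      have hd1 : (2+(t-τ))/2 ≤ 1 + (t-τ) := by linarith
      have hd2 : ((1+t)/2) ^ a ≤ (1+τ) ^ a :=
        Real.rpow_le_rpow (by positivity) (by linarith) (by linarith)
      have hapos : (0:ℝ) < ((1+t)/2) ^ a := Real.rpow_pos_of_pos (by linarith) a
      have hDpos : (0:ℝ) < (2+(t-τ))/2 * (Real.log (2+(t-τ)))^2 * ((1+t)/2) ^ a :=
        mul_pos (mul_pos (by linarith) (pow_pos hlgpos 2)) hapos
      have hstep : (Real.log (2+τ))^2 / ((1+(t-τ)) * (Real.log (2+(t-τ)))^2 * (1+τ) ^ a)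
          ≤ L^2 / ((2+(t-τ))/2 * (Real.log (2+(t-τ)))^2 * ((1+t)/2) ^ a) := by
        apply div_le_div₀ (by positivity) hnum hDpos
        apply mul_le_mul _ hd2 hapos.le
          (mul_nonneg (by linarith) (by positivity))
        apply mul_le_mul hd1 le_rfl (by positivity) (by linarith)
      refine hstep.trans (le_of_eq ?_)
      rw [hKB_def, Real.rpow_neg (by linarith : (0:ℝ) ≤ (1+t)/2)]
      have hane : ((1+t)/2) ^ a ≠ 0 := ne_of_gt hapos
      have hLne : L ≠ 0 := ne_of_gt hLpos
      have h2tne : (2+(t-τ)) ≠ 0 := by intro h; nlinarith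
      have hlgne : Real.log (2+(t-τ)) ≠ 0 := ne_of_gt hlgpos
      field_simp
    refine hmono.trans ?_
    rw [intervalIntegral.integral_const_mul]
    apply mul_le_mul_of_nonneg_left _ hKB
    have hcomp : (∫ τ in (t/2)..t, 1/((2+(t-τ)) * Real.log (2+(t-τ))^2))
        = ∫ s in (0:ℝ)..(t/2), 1/((2+s) * Real.log (2+s)^2) := by
      have h := intervalIntegral.integral_comp_sub_left (a := t/2) (b := t)
        (fun s => 1/((2+s) * Real.log (2+s)^2)) t
      simpa [sub_self, show t - t/2 = t/2 by ring] using h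
    rw [hcomp]
    exact integral_kernel_le (by linarith)
  -- assemble
  have hsplit : (∫ τ in (0:ℝ)..t, F τ)
      = (∫ τ in (0:ℝ)..(t/2), F τ) + ∫ τ in (t/2)..t, F τ :=
    (intervalIntegral.integral_add_adjacent_intervals hI1 hI2).symm
  rw [hsplit]
  have hmul : (1+t) * L^2 * ((∫ τ in (0:ℝ)..(t/2), F τ) + ∫ τ in (t/2)..t, F τ)
      ≤ (1+t) * L^2 * (KA * (1/(b-1)) + KB * (1/Real.log 2)) :=
    mul_le_mul_of_nonneg_left (add_le_add hA hB) (by positivity)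
  refine hmul.trans ?_
  -- first term
  have hT1 : (1+t) * L^2 * (KA * (1/(b-1))) = 32/(c^2*(a-1)) := by
    have hcne : c ≠ 0 := ne_of_gt hc
    have hane : a - 1 ≠ 0 := by intro h; rw [sub_eq_zero] at h; linarith
    have hne : (1+t) * L^2 ≠ 0 := by positivity
    have hb1 : b - 1 = (a-1)/2 := by rw [hb_def]; ring
    calc (1+t) * L^2 * (KA * (1/(b-1)))
        = (16/c^2) * (((1+t)*L^2) / ((1+t)*L^2)) * (1/(b-1)) := by rw [hKA_def]; ring
      _ = (16/c^2) * 1 * (1/(b-1)) := by rw [div_self hne]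
      _ = 32/(c^2*(a-1)) := by rw [hb1]; field_simp; ring
  -- second term
  have hT2 : (1+t) * L^2 * (KB * (1/Real.log 2)) ≤ 2/Real.log 2 * (32/c^4) := by
    rw [hKB_def]
    have hkey : (1+t) * L^4 * ((1+t)/2) ^ (-a) ≤ 32/c^4 := by
      have h2a : (2:ℝ) ^ a ≤ 8 := by
        calc (2:ℝ) ^ a ≤ (2:ℝ) ^ (3:ℝ) :=
              Real.rpow_le_rpow_of_exponent_le (by norm_num) (by linarith)
          _ = 8 := by
              rw [show (3:ℝ) = ((3:ℕ):ℝ) by norm_num, Real.rpow_natCast]; norm_num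
      have hL4 : L^4 ≤ 4/c^4 * (1+t) ^ (a-1) := by
        have hl : L ≤ (2+t) ^ c / c := by
          rw [hL_def]; exact log_le_rpow_aux hc (by linarith)
        have hl4 : L^4 ≤ ((2+t) ^ c / c)^4 := pow_le_pow_left₀ hLpos.le hl 4
        have he : ((2+t) ^ c / c)^4 = (2+t) ^ (4*c) / c^4 := by
          rw [div_pow, ← Real.rpow_natCast ((2+t) ^ c) 4, ← Real.rpow_mul (by linarith)]
          norm_num [mul_comm]
        have h4c : 4*c = a-1 := by rw [hc_def]; ring
        have hb1 : (2+t) ^ (a-1) ≤ 4 * (1+t) ^ (a-1) := by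
          have hle : (2+t) ≤ 2*(1+t) := by linarith
          have hh := Real.rpow_le_rpow (by linarith) hle (by linarith : (0:ℝ) ≤ a-1)
          rw [Real.mul_rpow (by norm_num) (by linarith)] at hh
          have h2c : (2:ℝ) ^ (a-1) ≤ 4 := by
            calc (2:ℝ) ^ (a-1) ≤ (2:ℝ) ^ (2:ℝ) :=
                  Real.rpow_le_rpow_of_exponent_le (by norm_num) (by linarith)
              _ = 4 := by
                  rw [show (2:ℝ) = ((2:ℕ):ℝ) by norm_num, Real.rpow_natCast]; norm_num
          nlinarith [Real.rpow_nonneg (show (0:ℝ) ≤ 1+t by linarith) (a-1)]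
        calc L^4 ≤ (2+t) ^ (4*c) / c^4 := by rw [← he]; exact hl4
          _ = (2+t) ^ (a-1) / c^4 := by rw [h4c]
          _ ≤ 4 * (1+t) ^ (a-1) / c^4 := by gcongr
          _ = 4/c^4 * (1+t) ^ (a-1) := by ring
      have hdiv : ((1+t)/2) ^ (-a) = (1+t) ^ (-a) * (2:ℝ) ^ a := by
        rw [Real.div_rpow (by linarith) (by norm_num),
          Real.rpow_neg (by linarith : (0:ℝ) ≤ 1+t), Real.rpow_neg (by norm_num : (0:ℝ) ≤ 2)]
        have : ((2:ℝ) ^ a) ≠ 0 := ne_of_gt (Real.rpow_pos_of_pos (by norm_num) a)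
        field_simp
      have hprod : (1+t) * (1+t) ^ (a-1) * (1+t) ^ (-a) = 1 := by
        have h1 : (1+t) ^ (a-1) * (1+t) ^ (-a) = (1+t) ^ (-1:ℝ) := by
          rw [← Real.rpow_add h1t]; congr 1; ring
        have h2 : (1+t) ^ (-1:ℝ) = (1+t)⁻¹ := Real.rpow_neg_one _
        rw [mul_assoc, h1, h2, mul_inv_cancel₀ (ne_of_gt h1t)]
      have hpa : (0:ℝ) < (1+t) ^ (-a) := Real.rpow_pos_of_pos h1t _
      have hpb : (0:ℝ) < (1+t) ^ (a-1) := Real.rpow_pos_of_pos h1t _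
      calc (1+t) * L^4 * ((1+t)/2) ^ (-a)
          = L^4 * ((1+t) * (1+t) ^ (-a)) * (2:ℝ) ^ a := by rw [hdiv]; ring
        _ ≤ (4/c^4 * (1+t) ^ (a-1)) * ((1+t) * (1+t) ^ (-a)) * (2:ℝ) ^ a := by
            have hpos : (0:ℝ) < (1+t) * (1+t) ^ (-a) := mul_pos h1t hpa
            have hpos2 : (0:ℝ) < (2:ℝ) ^ a := Real.rpow_pos_of_pos (by norm_num) a
            exact mul_le_mul_of_nonneg_right
              (mul_le_mul_of_nonneg_right hL4 hpos.le) hpos2.le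
        _ = 4/c^4 * ((1+t) * (1+t) ^ (a-1) * (1+t) ^ (-a)) * (2:ℝ) ^ a := by ring
        _ = 4/c^4 * (2:ℝ) ^ a := by rw [hprod]; ring
        _ ≤ 4/c^4 * 8 := by
            have h4 : (0:ℝ) ≤ 4/c^4 := by positivity
            exact mul_le_mul_of_nonneg_left h2a h4
        _ = 32/c^4 := by ring
    calc (1+t) * L^2 * (2 * L^2 * ((1+t)/2) ^ (-a) * (1/Real.log 2))
        = 2/Real.log 2 * ((1+t) * L^4 * ((1+t)/2) ^ (-a)) := by ring
      _ ≤ 2/Real.log 2 * (32/c^4) :=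
          mul_le_mul_of_nonneg_left hkey (by positivity)
  calc (1+t) * L^2 * (KA * (1/(b-1)) + KB * (1/Real.log 2))
      = (1+t) * L^2 * (KA * (1/(b-1))) + (1+t) * L^2 * (KB * (1/Real.log 2)) := by ring
    _ ≤ 32/(c^2*(a-1)) + 2/Real.log 2 * (32/c^4) := by rw [hT1]; linarith

theorem stmt_10 (p : ℝ) (hp : 3 < p) :
    ∃ C : ℝ, ∀ t : ℝ, 0 < t →
      (1 + t) * (Real.log (2 + t))^2 *
        ∫ τ in (0:ℝ)..t,
          (Real.log (2 + τ))^2 /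
            ((1 + |t - τ|) * (Real.log (2 + |t - τ|))^2 * (1 + τ) ^ (3 - 6/p)) ≤ C := by
  have hp0 : 0 < p := by linarith
  have ha1 : 1 < 3 - 6/p := by
    have h : 6/p < 2 := by rw [div_lt_iff₀ hp0]; linarith
    linarith
  have ha3 : 3 - 6/p < 3 := by
    have : 0 < 6/p := by positivity
    linarith
  exact stmt_10_aux (3 - 6/p) ha1 ha3
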